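/- For every real α with 0 < α < 1, every natural number n, and every real number y: (yα)_{n↑} = ∑_{k=0}^{n} S_{n,k}^{-1,-α} · α^k · (y)_{k↑}; equivalently, the generalized factorial coefficients C(n,k;α), defined as the connection coefficients in (αy)_{n↑} = ∑_{k=0}^n C(n,k;α)(y)_{k↑}, satisfy S_{n,k}^{-1,-α} = C(n,k;α)/α^k. -/

import Mathlib

/-- Generalized rising factorial `(x)_{n↑h} = ∏_{i=0}^{n-1} (x + i·h)`. -/
noncomputable def risefac (x h : ℝ) (n : ℕ) : ℝ := ∏ i ∈ Finset.range n, (x + i * h)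

/-- Generalized Stirling number `S_{n,k}^{-1,-α} = (n!/k!) ∑ ∏_j (1-α)_{n_j-1↑}/n_j!`,
the sum over positive tuples `(n_1,…,n_k)` with sum `n`. -/
noncomputable def genStirling (α : ℝ) (n k : ℕ) : ℝ :=
  ((n.factorial : ℝ) / k.factorial) *
    ∑ f ∈ (Finset.Nat.antidiagonalTuple k n).filter (fun f => ∀ i, 0 < f i),
      ∏ j, risefac (1 - α) 1 (f j - 1) / (f j).factorial


open Finset

lemma tuple_succ_sum (k n : ℕ) (F : (Fin (k+1) → ℕ) → ℝ) :
    ∑ f ∈ Finset.Nat.antidiagonalTuple (k+1) n, F f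
      = ∑ p ∈ Finset.HasAntidiagonal.antidiagonal n, ∑ f ∈ Finset.Nat.antidiagonalTuple k p.2,
          F (Fin.cons p.1 f) := by
  rw [Finset.sum_sigma']
  refine Finset.sum_bij' (fun (g : Fin (k+1) → ℕ) (_ : g ∈ Finset.Nat.antidiagonalTuple (k+1) n) =>
      (⟨(g 0, ∑ i : Fin k, g i.succ), Fin.tail g⟩ : (_ : ℕ × ℕ) × (Fin k → ℕ)))
    (fun x _ => Fin.cons x.1.1 x.2) ?_ ?_ ?_ ?_ ?_
  · intro g hg
    rw [Finset.Nat.mem_antidiagonalTuple] at hg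
    simp only [Finset.mem_sigma, Finset.Nat.mem_antidiagonalTuple, Finset.HasAntidiagonal.mem_antidiagonal]
    constructor
    · rw [← hg, Fin.sum_univ_succ]
    · rfl
  · rintro ⟨p, f⟩ hx
    simp only [Finset.mem_sigma, Finset.Nat.mem_antidiagonalTuple,
      Finset.HasAntidiagonal.mem_antidiagonal] at hx
    rw [Finset.Nat.mem_antidiagonalTuple, Fin.sum_cons, hx.2, hx.1]
  · intro g hg
    simp [Fin.cons_self_tail]
  · rintro ⟨⟨p1, p2⟩, f⟩ hx
    simp only [Finset.mem_sigma, Finset.Nat.mem_antidiagonalTuple,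
      Finset.mem_antidiagonal] at hx
    simp [Fin.cons_zero, Fin.tail_cons, Fin.cons_succ, hx.2]
  · intro g hg
    simp [Fin.cons_self_tail]

lemma coeff_pow_tuple (φ : PowerSeries ℝ) (k n : ℕ) :
    PowerSeries.coeff n (φ ^ k)
      = ∑ f ∈ Finset.Nat.antidiagonalTuple k n, ∏ i, PowerSeries.coeff (f i) φ := by
  induction k generalizing n with
  | zero =>
    cases n with
    | zero => simp [Finset.Nat.antidiagonalTuple_zero_zero]
    | succ m => simp [Finset.Nat.antidiagonalTuple_zero_succ, PowerSeries.coeff_one]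
  | succ k ih =>
    rw [pow_succ', PowerSeries.coeff_mul, tuple_succ_sum]
    refine Finset.sum_congr rfl fun p hp => ?_
    rw [ih, Finset.mul_sum]
    refine Finset.sum_congr rfl fun f hf => ?_
    rw [Fin.prod_univ_succ]
    simp [Fin.cons_zero, Fin.cons_succ]

-- sequence and series
noncomputable def gsA (α : ℝ) : ℕ → ℝ :=
  fun m => if m = 0 then 0 else risefac (1 - α) 1 (m - 1) / m.factorial

noncomputable def gsG (α : ℝ) : PowerSeries ℝ := PowerSeries.mk (gsA α)

lemma gsStir_eq (α : ℝ) (n k : ℕ) :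
    ((n.factorial : ℝ) / k.factorial) *
      ∑ f ∈ (Finset.Nat.antidiagonalTuple k n).filter (fun f => ∀ i, 0 < f i),
        ∏ j, risefac (1 - α) 1 (f j - 1) / (f j).factorial
    = ((n.factorial : ℝ) / k.factorial) * PowerSeries.coeff n ((gsG α) ^ k) := by
  rw [coeff_pow_tuple]
  congr 1
  have h1 : ∀ f ∈ (Finset.Nat.antidiagonalTuple k n),
      (∏ i, PowerSeries.coeff (f i) (gsG α)) ≠ 0 → (∀ i, 0 < f i) := by
    intro f _ hne i
    rcases Nat.eq_zero_or_pos (f i) with h | h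
    · exfalso; apply hne
      apply Finset.prod_eq_zero (Finset.mem_univ i)
      simp [gsG, gsA, h]
    · exact h
  rw [← Finset.sum_filter_of_ne h1]
  refine Finset.sum_congr rfl fun f hf => ?_
  rw [Finset.mem_filter] at hf
  refine Finset.prod_congr rfl fun i _ => ?_
  have : f i ≠ 0 := (hf.2 i).ne'
  simp [gsG, gsA, this]

open PowerSeries in
lemma gs_ode (α : ℝ) :
    (1 - X) * (d⁄dX ℝ (gsG α)) = 1 - (PowerSeries.C α) * gsG α := by
  ext n
  rw [sub_mul, one_mul, map_sub, map_sub]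
  cases n with
  | zero =>
    simp [PowerSeries.coeff_derivative, gsG, gsA, risefac]
  | succ m =>
    rw [PowerSeries.coeff_succ_X_mul, PowerSeries.coeff_derivative,
      PowerSeries.coeff_derivative, PowerSeries.coeff_one, PowerSeries.coeff_C_mul]
    simp only [gsG, PowerSeries.coeff_mk, gsA, Nat.succ_ne_zero, if_false,
      Nat.add_sub_cancel]
    have h1 : risefac (1 - α) 1 (m + 1) = risefac (1 - α) 1 m * (1 - α + m) := by
      rw [risefac, Finset.prod_range_succ]; rw [risefac]; ring
    have hfs : ((m + 1 + 1).factorial : ℝ) = ((m + 1).factorial : ℝ) * (m + 1 + 1) := by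
      rw [Nat.factorial_succ]; push_cast; ring
    have hf2 : ((m + 1).factorial : ℝ) ≠ 0 := Nat.cast_ne_zero.2 (Nat.factorial_ne_zero _)
    rw [h1, hfs]
    field_simp
    push_cast
    ring

open PowerSeries in
lemma gs_pow_ode (α : ℝ) (k : ℕ) :
    (1 - X) * (d⁄dX ℝ ((gsG α) ^ (k + 1)))
      = (k + 1 : ℕ) • ((gsG α) ^ k - (PowerSeries.C α) * (gsG α) ^ (k + 1)) := by
  have hD : d⁄dX ℝ ((gsG α) ^ (k + 1)) = (k + 1 : ℕ) • ((gsG α) ^ k * d⁄dX ℝ (gsG α)) := by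
    rw [Derivation.leibniz_pow]
    simp [smul_eq_mul]
  rw [hD, mul_smul_comm]
  congr 1
  calc (1 - X) * ((gsG α) ^ k * d⁄dX ℝ (gsG α))
      = (gsG α) ^ k * ((1 - X) * d⁄dX ℝ (gsG α)) := by ring
    _ = (gsG α) ^ k * (1 - (PowerSeries.C α) * gsG α) := by rw [gs_ode]
    _ = (gsG α) ^ k - (PowerSeries.C α) * (gsG α) ^ (k + 1) := by ring

open PowerSeries in
lemma gs_Arec (α : ℝ) (n k : ℕ) :
    ((n : ℝ) + 1) * coeff (n + 1) ((gsG α) ^ (k + 1))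
      = ((k : ℝ) + 1) * coeff n ((gsG α) ^ k)
        + ((n : ℝ) - ((k : ℝ) + 1) * α) * coeff n ((gsG α) ^ (k + 1)) := by
  have h := congrArg (coeff n) (gs_pow_ode α k)
  rw [sub_mul, one_mul, map_sub, map_nsmul, nsmul_eq_mul, map_sub,
    PowerSeries.coeff_C_mul, PowerSeries.coeff_derivative] at h
  cases n with
  | zero =>
    rw [show ((0:ℕ) + 1) = 1 from rfl] at h
    have h0 : (coeff 0) (X * (d⁄dX ℝ) ((gsG α) ^ (k + 1))) = 0 := by
      simp [PowerSeries.coeff_zero_eq_constantCoeff]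
    rw [h0] at h
    push_cast at h ⊢
    linarith [h]
  | succ m =>
    rw [PowerSeries.coeff_succ_X_mul, PowerSeries.coeff_derivative] at h
    push_cast at h ⊢
    linarith [h]

lemma genStirling_eq_coeff (α : ℝ) (n k : ℕ) :
    genStirling α n k
      = ((n.factorial : ℝ) / k.factorial) * PowerSeries.coeff n ((gsG α) ^ k) := by
  rw [genStirling]; exact gsStir_eq α n k

lemma genStirling_zero_zero (α : ℝ) : genStirling α 0 0 = 1 := by
  simp [genStirling, Finset.Nat.antidiagonalTuple_zero_zero]

lemma genStirling_succ_zero (α : ℝ) (n : ℕ) : genStirling α (n + 1) 0 = 0 := by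
  simp [genStirling, Finset.Nat.antidiagonalTuple_zero_succ]

lemma genStirling_eq_zero_of_lt (α : ℝ) {n k : ℕ} (h : n < k) : genStirling α n k = 0 := by
  rw [genStirling]
  have he : (Finset.Nat.antidiagonalTuple k n).filter (fun f => ∀ i, 0 < f i) = ∅ := by
    refine Finset.eq_empty_of_forall_notMem fun f hf => ?_
    rw [Finset.mem_filter, Finset.Nat.mem_antidiagonalTuple] at hf
    have h1 : ∑ i : Fin k, 1 ≤ ∑ i, f i := Finset.sum_le_sum fun i _ => hf.2 i
    simp only [Finset.sum_const, Finset.card_univ, Fintype.card_fin, smul_eq_mul,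
      mul_one, hf.1] at h1
    omega
  rw [he]
  simp

lemma genStirling_rec (α : ℝ) (n k : ℕ) :
    genStirling α (n + 1) (k + 1)
      = genStirling α n k + ((n : ℝ) - ((k : ℝ) + 1) * α) * genStirling α n (k + 1) := by
  rw [genStirling_eq_coeff, genStirling_eq_coeff, genStirling_eq_coeff]
  have h1 : ((n + 1).factorial : ℝ) = ((n : ℝ) + 1) * n.factorial := by
    rw [Nat.factorial_succ]; push_cast; ring
  have h2 : ((k + 1).factorial : ℝ) = ((k : ℝ) + 1) * k.factorial := by
    rw [Nat.factorial_succ]; push_cast; ring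
  have hk : ((k.factorial : ℝ)) ≠ 0 := Nat.cast_ne_zero.2 (Nat.factorial_ne_zero _)
  have hkk : ((k : ℝ) + 1) ≠ 0 := by positivity
  have key := gs_Arec α n k
  set A2 := PowerSeries.coeff (n + 1) ((gsG α) ^ (k + 1)) with hA2
  set A1 := PowerSeries.coeff n ((gsG α) ^ (k + 1)) with hA1
  set A0 := PowerSeries.coeff n ((gsG α) ^ k) with hA0
  rw [h1, h2]
  have step : ((n : ℝ) + 1) * (n.factorial : ℝ) / (((k : ℝ) + 1) * k.factorial) * A2
      = ((n.factorial : ℝ) / (((k : ℝ) + 1) * k.factorial)) * (((n : ℝ) + 1) * A2) := by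
    ring
  rw [step, key]
  field_simp

lemma risefac_succ (x : ℝ) (n : ℕ) : risefac x 1 (n + 1) = risefac x 1 n * (x + n) := by
  rw [risefac, Finset.prod_range_succ, risefac]
  ring

lemma risefac_zero (x : ℝ) : risefac x 1 0 = 1 := by simp [risefac]

lemma gs_part1 (α : ℝ) (n : ℕ) :
    ∀ y : ℝ, risefac (y * α) 1 n
      = ∑ k ∈ Finset.range (n + 1), genStirling α n k * α ^ k * risefac y 1 k := by
  induction n with
  | zero =>
    intro y
    simp [risefac_zero, genStirling_zero_zero]
  | succ n ih =>
    intro y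
    have hR : ∀ k : ℕ, risefac y 1 k * (y * α + n)
        = α * risefac y 1 (k + 1) + ((n : ℝ) - α * k) * risefac y 1 k := by
      intro k; rw [risefac_succ]; ring
    have hg0 : ((n : ℝ) - α * 0) * genStirling α n 0 * α ^ 0 * risefac y 1 0 = 0 := by
      cases n with
      | zero => simp
      | succ m => rw [genStirling_succ_zero]; ring
    have hgtop : ((n : ℝ) - α * (n + 1)) * genStirling α n (n + 1) * α ^ (n + 1)
        * risefac y 1 (n + 1) = 0 := by
      rw [genStirling_eq_zero_of_lt α (Nat.lt_succ_self n)]; ring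
    calc risefac (y * α) 1 (n + 1)
        = (∑ k ∈ Finset.range (n + 1), genStirling α n k * α ^ k * risefac y 1 k)
            * (y * α + n) := by rw [risefac_succ, ih y]
      _ = ∑ k ∈ Finset.range (n + 1),
            (genStirling α n k * α ^ (k + 1) * risefac y 1 (k + 1)
              + ((n : ℝ) - α * k) * genStirling α n k * α ^ k * risefac y 1 k) := by
          rw [Finset.sum_mul]
          refine Finset.sum_congr rfl fun k _ => ?_
          have h := hR k
          linear_combination (genStirling α n k * α ^ k) * h
      _ = (∑ k ∈ Finset.range (n + 1), genStirling α n k * α ^ (k + 1) * risefac y 1 (k + 1))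
            + ∑ k ∈ Finset.range (n + 1),
                ((n : ℝ) - α * k) * genStirling α n k * α ^ k * risefac y 1 k :=
          Finset.sum_add_distrib
      _ = (∑ k ∈ Finset.range (n + 1), genStirling α n k * α ^ (k + 1) * risefac y 1 (k + 1))
            + ∑ k ∈ Finset.range (n + 1),
                ((n : ℝ) - α * (k + 1)) * genStirling α n (k + 1) * α ^ (k + 1)
                  * risefac y 1 (k + 1) := by
          congr 1
          rw [Finset.sum_range_succ' (fun k => ((n : ℝ) - α * k) * genStirling α n k * α ^ k
            * risefac y 1 k) n,
            Finset.sum_range_succ (fun k => ((n : ℝ) - α * (k + 1)) * genStirling α n (k + 1)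
              * α ^ (k + 1) * risefac y 1 (k + 1)) n]
          push_cast
          rw [hg0, hgtop]
          try ring
      _ = ∑ k ∈ Finset.range (n + 1),
            genStirling α (n + 1) (k + 1) * α ^ (k + 1) * risefac y 1 (k + 1) := by
          rw [← Finset.sum_add_distrib]
          refine Finset.sum_congr rfl fun k _ => ?_
          rw [genStirling_rec]
          push_cast
          ring
      _ = ∑ k ∈ Finset.range (n + 2),
            genStirling α (n + 1) k * α ^ k * risefac y 1 k := by
          rw [Finset.sum_range_succ' (fun k => genStirling α (n + 1) k * α ^ k
            * risefac y 1 k) (n + 1)]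
          rw [genStirling_succ_zero]
          ring

lemma risefac_neg_eq_zero {m k : ℕ} (h : m < k) : risefac (-(m : ℝ)) 1 k = 0 := by
  rw [risefac]
  exact Finset.prod_eq_zero (Finset.mem_range.2 h) (by push_cast; ring)

lemma risefac_neg_ne_zero (m : ℕ) : risefac (-(m : ℝ)) 1 m ≠ 0 := by
  rw [risefac]
  refine Finset.prod_ne_zero_iff.2 fun i hi => ?_
  rw [Finset.mem_range] at hi
  have : (i : ℝ) < m := by exact_mod_cast hi
  intro hc
  rw [mul_one] at hc
  have : (i : ℝ) = m := by linarith
  linarith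

/-- For `0 < α < 1`: `(yα)_{n↑} = ∑_{k=0}^n S_{n,k}^{-1,-α} α^k (y)_{k↑}`; equivalently, if
`C(n,·;α)` are connection coefficients with `(αy)_{n↑} = ∑_k C(n,k;α)(y)_{k↑}`, then
`S_{n,k}^{-1,-α} = C(n,k;α)/α^k`. -/
theorem genStirling_genFactorialCoeff (α : ℝ) (hα0 : 0 < α) (hα1 : α < 1) (n : ℕ) :
    (∀ y : ℝ, risefac (y * α) 1 n =
        ∑ k ∈ Finset.range (n + 1), genStirling α n k * α ^ k * risefac y 1 k)
    ∧ ∀ C : ℕ → ℝ,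
        (∀ y : ℝ, risefac (α * y) 1 n =
          ∑ k ∈ Finset.range (n + 1), C k * risefac y 1 k) →
        ∀ k ≤ n, genStirling α n k = C k / α ^ k := by
  refine ⟨gs_part1 α n, ?_⟩
  intro C hC k hk
  set d : ℕ → ℝ := fun j => genStirling α n j * α ^ j - C j with hd_def
  have hzero : ∀ y : ℝ, ∑ j ∈ Finset.range (n + 1), d j * risefac y 1 j = 0 := by
    intro y
    have h2 := hC y
    rw [mul_comm α y] at h2
    calc ∑ j ∈ Finset.range (n + 1), d j * risefac y 1 j
        = (∑ j ∈ Finset.range (n + 1), genStirling α n j * α ^ j * risefac y 1 j)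
            - ∑ j ∈ Finset.range (n + 1), C j * risefac y 1 j := by
          rw [← Finset.sum_sub_distrib]
          exact Finset.sum_congr rfl fun j _ => by simp only [hd_def]; ring
      _ = 0 := by rw [← gs_part1 α n y, ← h2, sub_self]
  have hd : ∀ m, m ≤ n → d m = 0 := by
    intro m
    induction m using Nat.strong_induction_on with
    | _ m IH =>
      intro hm
      have h := hzero (-(m : ℝ))
      have hsingle : ∑ j ∈ Finset.range (n + 1), d j * risefac (-(m : ℝ)) 1 j
          = d m * risefac (-(m : ℝ)) 1 m := by
        refine Finset.sum_eq_single_of_mem m (Finset.mem_range.2 (by omega)) fun j hj hne => ?_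
        rcases lt_or_gt_of_ne hne with hlt | hgt
        · rw [IH j hlt (by omega), zero_mul]
        · rw [risefac_neg_eq_zero hgt, mul_zero]
      rw [hsingle] at h
      exact (mul_eq_zero.1 h).resolve_right (risefac_neg_ne_zero m)
  have hdk := hd k hk
  have hα : α ^ k ≠ 0 := pow_ne_zero _ (ne_of_gt hα0)
  rw [eq_div_iff hα]
  have : genStirling α n k * α ^ k - C k = 0 := hdk
  linarith
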